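/- For every real number d with -1 < d < 1/2 and d ≠ 0, and every natural number h, the autocovariance integral of fractional noise evaluates in closed form: (1/(2π)) ∫_{-π}^{π} (2 - 2 cos λ)^(-d) cos(h λ) dλ = Γ(1 - 2d) Γ(h + d) / ( Γ(1 - d) Γ(d) Γ(1 + h - d) ). Consequently, for innovation variance σ² > 0, the ARFIMA(0,d,0) autocovariance is γ₀(h) = σ² Γ(1-2d) Γ(h+d) / (Γ(1-d) Γ(d) Γ(1+h-d)), and the autocorrelation is ρ₀(h) = Γ(1-d) Γ(h+d) / (Γ(d) Γ(1+h-d)). -/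

import Mathlib

open Real intervalIntegral

namespace FracNoiseAux

open MeasureTheory Set Filter Topology

/-! ### Elementary facts about `2 - 2 cos x` -/

lemma c_nonneg (x : ℝ) : 0 ≤ 2 - 2 * Real.cos x := by nlinarith [Real.cos_le_one x]

lemma c_pos {x : ℝ} (hx : x ≠ 0) (h1 : -π ≤ x) (h2 : x ≤ π) : 0 < 2 - 2 * Real.cos x := by
  have hne : Real.cos x ≠ 1 := by
    intro hc
    exact hx ((Real.cos_eq_one_iff_of_lt_of_lt (by nlinarith [Real.pi_pos])
      (by nlinarith [Real.pi_pos])).mp hc)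
  have := Real.cos_le_one x
  rcases lt_of_le_of_ne this hne with h
  linarith

lemma c_upper (x : ℝ) : 2 - 2 * Real.cos x ≤ x^2 := by
  nlinarith [Real.one_sub_sq_div_two_le_cos (x := x)]

lemma c_lower {x : ℝ} (h1 : -π ≤ x) (h2 : x ≤ π) : (2/π)^2 * x^2 ≤ 2 - 2 * Real.cos x := by
  have hπ := Real.pi_pos
  have hce : ∀ y : ℝ, 2 - 2 * Real.cos y = 4 * Real.sin (y/2) ^ 2 := by
    intro y
    have h1 := Real.cos_two_mul (y/2)
    rw [show 2 * (y/2) = y by ring] at h1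
    have h2 := Real.sin_sq_add_cos_sq (y/2)
    nlinarith
  have key : ∀ y : ℝ, 0 ≤ y → y ≤ π → (2/π)^2 * y^2 ≤ 2 - 2 * Real.cos y := by
    intro y hy0 hyπ
    have hs : 2 / π * (y/2) ≤ Real.sin (y/2) := Real.mul_le_sin (by linarith) (by linarith)
    have hge0 : (0:ℝ) ≤ 2 / π * (y/2) := by positivity
    have hsq : (2 / π * (y/2))^2 ≤ Real.sin (y/2)^2 := by nlinarith
    have := hce y
    nlinarith
  rcases le_or_gt 0 x with hx | hx
  · exact key x hx h2
  · have := key (-x) (by linarith) (by linarith)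
    simpa [Real.cos_neg, neg_sq] using this

/-! ### Integrability -/

lemma integrable_main {e : ℝ} (he : e < 1/2) (k : ℝ) :
    IntervalIntegrable (fun x => (2 - 2 * Real.cos x) ^ (-e) * Real.cos (k * x))
      volume (-π) π := by
  have hπ := Real.pi_pos
  rcases le_or_gt e 0 with he0 | he0
  · apply Continuous.intervalIntegrable
    apply Continuous.mul ?_ (by continuity)
    apply Continuous.rpow_const (by continuity)
    exact fun x => Or.inr (by linarith)
  · have hmeas : Measurable fun x : ℝ => (2 - 2 * Real.cos x) ^ (-e) * Real.cos (k * x) := by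
      fun_prop
    have base : IntervalIntegrable (fun x => (2 - 2 * Real.cos x) ^ (-e) * Real.cos (k * x))
        volume 0 π := by
      apply IntervalIntegrable.mono_fun'
        (g := fun x => (π/2) ^ (2*e) * x ^ (-(2*e)))
      · exact (intervalIntegrable_rpow' (by linarith)).const_mul _
      · exact hmeas.aestronglyMeasurable
      · rw [uIoc_of_le hπ.le]
        refine (ae_restrict_iff' measurableSet_Ioc).2 (Filter.Eventually.of_forall ?_)
        intro x hx
        have hx0 : 0 < x := hx.1
        have hxπ : x ≤ π := hx.2
        have hlow : (2/π * x)^2 ≤ 2 - 2 * Real.cos x := by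
          have := c_lower (by linarith : -π ≤ x) hxπ
          calc (2/π * x)^2 = (2/π)^2 * x^2 := by ring
          _ ≤ _ := this
        have hbase_pos : (0:ℝ) < (2/π * x)^2 := by positivity
        have h1 : (2 - 2 * Real.cos x) ^ (-e) ≤ ((2/π * x)^2) ^ (-e) :=
          Real.rpow_le_rpow_of_nonpos hbase_pos hlow (by linarith)
        have e1 : ((2:ℝ)/π) ^ ((2:ℝ) * (-e)) = (π/2) ^ (2*e) := by
          rw [show (2:ℝ)/π = (π/2)⁻¹ by rw [inv_div]]
          rw [Real.inv_rpow (by positivity), ← Real.rpow_neg (by positivity)]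
          norm_num
        have h2 : ((2/π * x)^2 : ℝ) ^ (-e) = (π/2) ^ (2*e) * x ^ (-(2*e)) := by
          rw [← Real.rpow_natCast (2/π * x) 2, ← Real.rpow_mul (by positivity),
            Real.mul_rpow (by positivity) hx0.le]
          push_cast
          rw [e1]
          congr 1
          ring
        beta_reduce
        rw [norm_mul, Real.norm_eq_abs, Real.norm_eq_abs,
          abs_of_nonneg (Real.rpow_nonneg (c_nonneg x) _)]
        calc (2 - 2 * Real.cos x) ^ (-e) * |Real.cos (k * x)|
            ≤ (2 - 2 * Real.cos x) ^ (-e) * 1 := by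
              apply mul_le_mul_of_nonneg_left (Real.abs_cos_le_one _)
                (Real.rpow_nonneg (c_nonneg x) _)
        _ = (2 - 2 * Real.cos x) ^ (-e) := mul_one _
        _ ≤ ((2/π * x)^2) ^ (-e) := h1
        _ = (π/2) ^ (2*e) * x ^ (-(2*e)) := h2
    have symm : IntervalIntegrable (fun x => (2 - 2 * Real.cos x) ^ (-e) * Real.cos (k * x))
        volume (-π) 0 := by
      have h2 := (IntervalIntegrable.iff_comp_neg enorm_ne_top).mp base.symm
      rw [neg_zero] at h2
      simpa only [Real.cos_neg, mul_neg] using h2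
    exact symm.trans base

/-! ### The real Beta integral -/

lemma real_beta {a b : ℝ} (ha : 0 < a) (hb : 0 < b) :
    ∫ s in Ioo (0:ℝ) 1, s ^ (a-1) * (1-s) ^ (b-1) =
      Real.Gamma a * Real.Gamma b / Real.Gamma (a+b) := by
  have h1 : Complex.betaIntegral a b
      = ((∫ s in (0:ℝ)..1, s ^ (a-1) * (1-s) ^ (b-1) : ℝ) : ℂ) := by
    rw [Complex.betaIntegral, ← intervalIntegral.integral_ofReal]
    apply intervalIntegral.integral_congr
    intro x hx
    rw [uIcc_of_le zero_le_one] at hx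
    beta_reduce
    rw [show ((a:ℂ) - 1) = ((a-1 : ℝ) : ℂ) by push_cast; ring,
        show ((b:ℂ) - 1) = ((b-1 : ℝ) : ℂ) by push_cast; ring,
        show (1 - (x:ℂ)) = ((1 - x : ℝ) : ℂ) by push_cast; ring,
        ← Complex.ofReal_cpow hx.1,
        ← Complex.ofReal_cpow (by linarith [hx.2] : (0:ℝ) ≤ 1 - x),
        ← Complex.ofReal_mul]
  have h2 := Complex.Gamma_mul_Gamma_eq_betaIntegral
    (s := (a:ℂ)) (t := (b:ℂ)) (by simpa using ha) (by simpa using hb)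
  rw [h1] at h2
  rw [show ((a:ℂ) + b) = ((a+b : ℝ) : ℂ) by push_cast; ring] at h2
  rw [Complex.Gamma_ofReal, Complex.Gamma_ofReal, Complex.Gamma_ofReal] at h2
  have h3 : Real.Gamma a * Real.Gamma b
      = Real.Gamma (a+b) * ∫ s in (0:ℝ)..1, s ^ (a-1) * (1-s) ^ (b-1) := by
    exact_mod_cast h2
  have hG : Real.Gamma (a+b) ≠ 0 := (Real.Gamma_pos_of_pos (by linarith)).ne'
  rw [intervalIntegral.integral_of_le zero_le_one, integral_Ioc_eq_integral_Ioo] at h3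
  field_simp at h3 ⊢
  linarith [h3]

/-! ### The base-case integral -/

lemma base_integral {e : ℝ} (he : e < 1/2) :
    ∫ x in (0:ℝ)..π, (2 - 2 * Real.cos x) ^ (-e)
      = π * Real.Gamma (1 - 2*e) / Real.Gamma (1 - e) ^ 2 := by
  have hπ := Real.pi_pos
  set φ : ℝ → ℝ := fun x => (1 - Real.cos x) / 2 with hφ
  set g : ℝ → ℝ := fun s => (4:ℝ) ^ (-e) * (s ^ ((1/2 - e) - 1) * (1-s) ^ ((1/2 : ℝ) - 1))
    with hg
  have hmem : ∀ x ∈ Ioo 0 π, φ x ∈ Ioo (0:ℝ) 1 := by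
    intro x hx
    have hsin : 0 < Real.sin x := Real.sin_pos_of_pos_of_lt_pi hx.1 hx.2
    have hc1 : Real.cos x < 1 := by
      have := c_pos (ne_of_gt hx.1) (by linarith [hx.1]) hx.2.le; linarith
    have hsq : Real.sin x ^ 2 = (1 - Real.cos x) * (1 + Real.cos x) := by
      nlinarith [Real.sin_sq_add_cos_sq x]
    have hc2 : -1 < Real.cos x := by nlinarith [pow_pos hsin 2]
    exact ⟨by simp only [hφ]; linarith, by simp only [hφ]; linarith⟩
  have himg : φ '' Ioo 0 π = Ioo (0:ℝ) 1 := by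
    apply Subset.antisymm
    · rintro s ⟨x, hx, rfl⟩; exact hmem x hx
    · rintro s hs
      have hb1 : (-1:ℝ) ≤ 1 - 2*s := by linarith [hs.2]
      have hb2 : (1 - 2*s : ℝ) ≤ 1 := by linarith [hs.1]
      refine ⟨Real.arccos (1 - 2*s), ⟨Real.arccos_pos.2 (by linarith [hs.1]), ?_⟩, ?_⟩
      · refine lt_of_le_of_ne (Real.arccos_le_pi _) fun hp => ?_
        have := Real.cos_arccos hb1 hb2
        rw [hp, Real.cos_pi] at this
        linarith [hs.2]
      · simp only [hφ]; rw [Real.cos_arccos hb1 hb2]; ring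
  have hinj : InjOn φ (Ioo 0 π) := by
    intro x hx y hy hxy
    apply Real.injOn_cos ⟨hx.1.le, hx.2.le⟩ ⟨hy.1.le, hy.2.le⟩
    simp only [hφ] at hxy; linarith
  have hderiv : ∀ x ∈ Ioo 0 π, HasDerivWithinAt φ (Real.sin x / 2) (Ioo 0 π) x := by
    intro x _
    have := ((Real.hasDerivAt_cos x).const_sub 1).div_const 2
    simpa using this.hasDerivWithinAt
  have hsub := integral_image_eq_integral_abs_deriv_smul measurableSet_Ioo hderiv hinj g
  rw [himg] at hsub
  have hpt : ∀ x ∈ Ioo 0 π, |Real.sin x / 2| • g (φ x) = (2 - 2*Real.cos x) ^ (-e) := by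
    intro x hx
    have hsin : 0 < Real.sin x := Real.sin_pos_of_pos_of_lt_pi hx.1 hx.2
    obtain ⟨hs0, hs1⟩ := hmem x hx
    have hss : Real.sqrt (φ x * (1 - φ x)) = Real.sin x / 2 := by
      rw [show φ x * (1 - φ x) = (Real.sin x / 2)^2 by
        simp only [hφ]; nlinarith [Real.sin_sq_add_cos_sq x]]
      exact Real.sqrt_sq (by positivity)
    have hc : 2 - 2*Real.cos x = 4 * φ x := by simp only [hφ]; ring
    rw [smul_eq_mul, abs_of_pos (by positivity : (0:ℝ) < Real.sin x / 2)]
    rw [hc, hg]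
    beta_reduce
    rw [show ((1:ℝ)/2 - e) - 1 = (-e) + (-(1/2)) by ring,
        show ((1:ℝ)/2) - 1 = -(1/2) by ring]
    rw [Real.rpow_add hs0, Real.mul_rpow (by norm_num) hs0.le]
    have h12 : φ x ^ (-(1/2:ℝ)) * (1 - φ x) ^ (-(1/2:ℝ)) = (Real.sin x / 2)⁻¹ := by
      rw [Real.rpow_neg hs0.le, Real.rpow_neg (by linarith), ← mul_inv,
        ← Real.sqrt_eq_rpow, ← Real.sqrt_eq_rpow, ← Real.sqrt_mul hs0.le, hss]
    have hrw : φ x ^ (-e) * φ x ^ (-(1/2:ℝ)) * (1 - φ x) ^ (-(1/2:ℝ))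
        = φ x ^ (-e) * (Real.sin x / 2)⁻¹ := by rw [mul_assoc, h12]
    rw [hrw]
    field_simp
  have hleft : ∫ x in (0:ℝ)..π, (2 - 2*Real.cos x) ^ (-e) = ∫ s in Ioo (0:ℝ) 1, g s := by
    rw [intervalIntegral.integral_of_le hπ.le, integral_Ioc_eq_integral_Ioo, hsub]
    exact (setIntegral_congr_fun measurableSet_Ioo hpt).symm
  have hbeta : ∫ s in Ioo (0:ℝ) 1, g s
      = (4:ℝ)^(-e) * (Real.Gamma (1/2-e) * Real.Gamma (1/2) / Real.Gamma (1-e)) := by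
    rw [hg, MeasureTheory.integral_const_mul, real_beta (by linarith) (by norm_num)]
    rw [show ((1:ℝ)/2 - e + 1/2) = 1 - e by ring]
  rw [hleft, hbeta]
  have hGe : Real.Gamma (1-e) ≠ 0 := (Real.Gamma_pos_of_pos (by linarith)).ne'
  have hdup : Real.Gamma (1/2-e) * Real.Gamma (1-e)
      = Real.Gamma (1-2*e) * (2:ℝ)^(2*e) * √π := by
    have h := Real.Gamma_mul_Gamma_add_half (1/2 - e)
    rw [show (1/2 - e + 1/2 : ℝ) = 1 - e by ring, show (2*(1/2-e) : ℝ) = 1-2*e by ring,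
        show (1 - (1 - 2*e) : ℝ) = 2*e by ring] at h
    exact h
  have hGhalf : Real.Gamma (1/2 - e)
      = Real.Gamma (1-2*e) * (2:ℝ)^(2*e) * √π / Real.Gamma (1-e) := by
    rw [eq_div_iff hGe]; exact hdup
  have h4 : (4:ℝ)^(-e) * (2:ℝ)^(2*e) = 1 := by
    rw [show (4:ℝ) = (2:ℝ)^(2:ℕ) by norm_num, ← Real.rpow_natCast (2:ℝ) 2,
      ← Real.rpow_mul (by norm_num), ← Real.rpow_add (by norm_num : (0:ℝ) < 2)]
    norm_num
  have hsqπ : √π * √π = π := Real.mul_self_sqrt hπ.le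
  rw [hGhalf, Real.Gamma_one_half_eq]
  field_simp
  rw [show e * 2 = 2 * e by ring]
  linear_combination (Real.Gamma (1-2*e) * √π * √π) * h4
    + (Real.Gamma (1-2*e)) * hsqπ

/-! ### Value at frequency zero -/

lemma F_zero {e : ℝ} (he : e < 1/2) :
    (∫ x in (-π)..π, (2 - 2 * Real.cos x) ^ (-e) * Real.cos (0 * x))
      = 2 * (π * Real.Gamma (1 - 2*e) / Real.Gamma (1 - e) ^ 2) := by
  have hπ := Real.pi_pos
  have hfun : (fun x => (2 - 2 * Real.cos x) ^ (-e) * Real.cos (0 * x))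
      = fun x => (2 - 2 * Real.cos x) ^ (-e) := by
    funext x; simp
  have hi0 := integrable_main he 0
  rw [hfun] at hi0 ⊢
  have hsub1 : Set.uIcc (-π) (0:ℝ) ⊆ Set.uIcc (-π) π := by
    rw [uIcc_of_le (by linarith), uIcc_of_le (by linarith)]
    exact Icc_subset_Icc le_rfl hπ.le
  have hsub2 : Set.uIcc (0:ℝ) π ⊆ Set.uIcc (-π) π := by
    rw [uIcc_of_le hπ.le, uIcc_of_le (by linarith)]
    exact Icc_subset_Icc (by linarith) le_rfl
  rw [← intervalIntegral.integral_add_adjacent_intervals (a := -π) (b := 0) (c := π)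
    (hi0.mono_set hsub1) (hi0.mono_set hsub2)]
  have hneg : (∫ x in (-π)..(0:ℝ), (2 - 2 * Real.cos x) ^ (-e))
      = ∫ x in (0:ℝ)..π, (2 - 2 * Real.cos x) ^ (-e) := by
    have h := intervalIntegral.integral_comp_neg (a := (0:ℝ)) (b := π)
      (f := fun x => (2 - 2 * Real.cos x) ^ (-e))
    rw [neg_zero] at h
    rw [← h]
    apply intervalIntegral.integral_congr
    intro x _
    simp [Real.cos_neg]
  rw [hneg, base_integral he]
  ring

/-! ### The three-term product relation -/

lemma rel1 {d : ℝ} (hd2 : d < 1/2) (k : ℝ) :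
    (∫ x in (-π)..π, (2 - 2 * Real.cos x) ^ (-(d-1)) * Real.cos (k * x))
      = 2 * (∫ x in (-π)..π, (2 - 2 * Real.cos x) ^ (-d) * Real.cos (k * x))
        - (∫ x in (-π)..π, (2 - 2 * Real.cos x) ^ (-d) * Real.cos ((k+1) * x))
        - (∫ x in (-π)..π, (2 - 2 * Real.cos x) ^ (-d) * Real.cos ((k-1) * x)) := by
  have hint1 := integrable_main hd2 k
  have hint2 := integrable_main hd2 (k+1)
  have hint3 := integrable_main hd2 (k-1)
  have hpt : (fun x => (2 - 2 * Real.cos x) ^ (-(d-1)) * Real.cos (k * x))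
      = fun x => 2 * ((2 - 2 * Real.cos x) ^ (-d) * Real.cos (k * x))
        - (2 - 2 * Real.cos x) ^ (-d) * Real.cos ((k+1) * x)
        - (2 - 2 * Real.cos x) ^ (-d) * Real.cos ((k-1) * x) := by
    funext x
    have trig : Real.cos ((k+1)*x) + Real.cos ((k-1)*x) = 2 * Real.cos x * Real.cos (k*x) := by
      rw [show (k+1)*x = k*x + x by ring, show (k-1)*x = k*x - x by ring,
        Real.cos_add, Real.cos_sub]
      ring
    rcases eq_or_lt_of_le (c_nonneg x) with h0 | hpos
    · have hc1 : Real.cos x = 1 := by linarith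
      rw [← h0, Real.zero_rpow (by intro hc; linarith : -(d-1) ≠ 0)]
      linear_combination ((0:ℝ)^(-d)) * trig + (2*(0:ℝ)^(-d)*Real.cos (k*x)) * hc1
    · have hbase : (2 - 2 * Real.cos x) ^ (-(d-1))
          = (2 - 2 * Real.cos x) * (2 - 2 * Real.cos x) ^ (-d) := by
        rw [show -(d-1) = 1 + (-d) by ring, Real.rpow_add hpos, Real.rpow_one]
      linear_combination Real.cos (k*x) * hbase + ((2 - 2*Real.cos x)^(-d)) * trig
  rw [hpt]
  rw [intervalIntegral.integral_sub ((hint1.const_mul 2).sub hint2) hint3,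
    intervalIntegral.integral_sub (hint1.const_mul 2) hint2,
    intervalIntegral.integral_const_mul]

/-! ### Derivative of the auxiliary function -/

lemma hasDeriv_G {d : ℝ} (hd2 : d < 1/2) (k : ℝ) (x : ℝ)
    (hx1 : -π ≤ x) (hx2 : x ≤ π) :
    HasDerivAt (fun y => (2 - 2 * Real.cos y) ^ (1-d) * Real.sin (k*y))
      ((1-d) * ((2 - 2 * Real.cos x) ^ (-d) * Real.cos ((k-1)*x)
          - (2 - 2 * Real.cos x) ^ (-d) * Real.cos ((k+1)*x))
        + k * ((2 - 2 * Real.cos x) ^ (-(d-1)) * Real.cos (k*x))) x := by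
  have hsk : HasDerivAt (fun y => Real.sin (k*y)) (Real.cos (k*x) * k) x := by
    have h1 : HasDerivAt (fun y : ℝ => k * y) (k * 1) x := (hasDerivAt_id x).const_mul k
    have h2 := (Real.hasDerivAt_sin (k*x)).comp x h1
    rw [mul_one] at h2
    exact h2
  rcases eq_or_ne x 0 with rfl | hx0
  · have hval : (1-d) * ((2 - 2 * Real.cos 0) ^ (-d) * Real.cos ((k-1)*0)
          - (2 - 2 * Real.cos 0) ^ (-d) * Real.cos ((k+1)*0))
        + k * ((2 - 2 * Real.cos 0) ^ (-(d-1)) * Real.cos (k*0)) = 0 := by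
      rw [Real.cos_zero]
      rw [show (2 - 2*(1:ℝ)) = 0 by norm_num,
        Real.zero_rpow (by intro hc; linarith [hc] : -(d-1) ≠ 0)]
      simp
    rw [hval]
    rw [hasDerivAt_iff_tendsto_slope]
    apply squeeze_zero_norm' (a := fun y => |y| ^ (1 - 2*d))
    · filter_upwards [self_mem_nhdsWithin] with y (hy : y ≠ 0)
      have hyabs : 0 < |y| := abs_pos.2 hy
      have hG : |(2 - 2 * Real.cos y) ^ (1-d) * Real.sin (k*y)| ≤ |y| ^ (2 - 2*d) := by
        rw [abs_mul]
        have h1 : |(2 - 2 * Real.cos y) ^ (1-d)| = (2 - 2 * Real.cos y) ^ (1-d) :=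
          abs_of_nonneg (Real.rpow_nonneg (c_nonneg y) _)
        have h2 : (2 - 2 * Real.cos y) ^ (1-d) ≤ (y^2) ^ (1-d) :=
          Real.rpow_le_rpow (c_nonneg y) (c_upper y) (by linarith)
        have h3 : (y^2 : ℝ) ^ (1-d) = |y| ^ (2 - 2*d) := by
          rw [← sq_abs, ← Real.rpow_natCast |y| 2, ← Real.rpow_mul (abs_nonneg y)]
          norm_num; ring_nf
        calc |(2 - 2 * Real.cos y) ^ (1-d)| * |Real.sin (k*y)|
            ≤ |(2 - 2 * Real.cos y) ^ (1-d)| * 1 :=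
              mul_le_mul_of_nonneg_left (Real.abs_sin_le_one _) (abs_nonneg _)
          _ = (2 - 2 * Real.cos y) ^ (1-d) := by rw [mul_one, h1]
          _ ≤ (y^2) ^ (1-d) := h2
          _ = |y| ^ (2 - 2*d) := h3
      have hslope : slope (fun y => (2 - 2 * Real.cos y) ^ (1-d) * Real.sin (k*y)) 0 y
          = ((2 - 2 * Real.cos y) ^ (1-d) * Real.sin (k*y)) / y := by
        rw [slope_def_field]
        rw [show (2 - 2*Real.cos 0 : ℝ) = 0 by simp,
          Real.zero_rpow (by intro hc; linarith : (1:ℝ)-d ≠ 0)]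
        field_simp
        ring
      rw [hslope, norm_div]
      rw [show ‖y‖ = |y| from rfl]
      calc ‖(2 - 2 * Real.cos y) ^ (1-d) * Real.sin (k*y)‖ / |y|
          ≤ |y| ^ (2-2*d) / |y| := div_le_div_of_nonneg_right hG hyabs.le
        _ = |y| ^ (1 - 2*d) := by
            rw [show (2 - 2*d : ℝ) = (1 - 2*d) + 1 by ring, Real.rpow_add hyabs,
              Real.rpow_one]
            field_simp
    · have hcont : ContinuousAt (fun y : ℝ => |y| ^ (1 - 2*d)) 0 :=
        ContinuousAt.rpow_const continuous_abs.continuousAt (Or.inr (by linarith))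
      have h0 : |(0:ℝ)| ^ (1 - 2*d) = 0 := by
        rw [abs_zero, Real.zero_rpow (by intro hc; linarith : (1:ℝ) - 2*d ≠ 0)]
      have := hcont.tendsto
      rw [h0] at this
      exact this.mono_left nhdsWithin_le_nhds
  · have hpos : 0 < 2 - 2 * Real.cos x := c_pos hx0 hx1 hx2
    have hu : HasDerivAt (fun y : ℝ => 2 - 2 * Real.cos y) (2 * Real.sin x) x := by
      have := ((Real.hasDerivAt_cos x).const_mul 2).const_sub 2
      simpa using this
    have hG := (hu.rpow_const (p := 1-d) (Or.inl hpos.ne')).mul hsk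
    refine hG.congr_deriv (Eq.symm ?_)
    have trig : Real.cos ((k-1)*x) - Real.cos ((k+1)*x) = 2 * Real.sin (k*x) * Real.sin x := by
      rw [show (k-1)*x = k*x - x by ring, show (k+1)*x = k*x + x by ring,
        Real.cos_sub, Real.cos_add]
      ring
    have hsplit : (2 - 2 * Real.cos x) ^ (-(d-1))
        = (2 - 2*Real.cos x) * (2 - 2 * Real.cos x) ^ (-d) := by
      rw [show -(d-1) = 1 + (-d) by ring, Real.rpow_add hpos, Real.rpow_one]
    have hm : (2 - 2 * Real.cos x) ^ ((1-d) - 1) = (2 - 2 * Real.cos x) ^ (-d) := by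
      norm_num
    have h1d : (2 - 2 * Real.cos x) ^ (1-d)
        = (2 - 2*Real.cos x) * (2 - 2 * Real.cos x) ^ (-d) := by
      rw [show (1-d) = 1 + (-d) by ring, Real.rpow_add hpos, Real.rpow_one]
    rw [hsplit, hm, h1d]
    linear_combination ((1-d) * (2 - 2 * Real.cos x) ^ (-d)) * trig

/-! ### The recurrence from the fundamental theorem of calculus -/

lemma rec_nat {d : ℝ} (hd2 : d < 1/2) (n : ℕ) :
    (1-d) * ((∫ x in (-π)..π, (2 - 2 * Real.cos x) ^ (-d) * Real.cos (((n:ℝ)-1) * x))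
        - (∫ x in (-π)..π, (2 - 2 * Real.cos x) ^ (-d) * Real.cos (((n:ℝ)+1) * x)))
      + (n:ℝ) * (∫ x in (-π)..π, (2 - 2 * Real.cos x) ^ (-(d-1)) * Real.cos ((n:ℝ) * x))
      = 0 := by
  have hπ := Real.pi_pos
  have hi1 := integrable_main hd2 ((n:ℝ)-1)
  have hi2 := integrable_main hd2 ((n:ℝ)+1)
  have hi3 := integrable_main (show d - 1 < 1/2 by linarith) (n:ℝ)
  have hderiv : ∀ x ∈ Set.uIcc (-π) π,
      HasDerivAt (fun y => (2 - 2 * Real.cos y) ^ (1-d) * Real.sin ((n:ℝ)*y))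
        ((1-d) * ((2 - 2 * Real.cos x) ^ (-d) * Real.cos (((n:ℝ)-1)*x)
            - (2 - 2 * Real.cos x) ^ (-d) * Real.cos (((n:ℝ)+1)*x))
          + (n:ℝ) * ((2 - 2 * Real.cos x) ^ (-(d-1)) * Real.cos ((n:ℝ)*x))) x := by
    intro x hx
    rw [uIcc_of_le (by linarith)] at hx
    exact hasDeriv_G hd2 (n:ℝ) x hx.1 hx.2
  have hint : IntervalIntegrable (fun x =>
      (1-d) * ((2 - 2 * Real.cos x) ^ (-d) * Real.cos (((n:ℝ)-1)*x)
          - (2 - 2 * Real.cos x) ^ (-d) * Real.cos (((n:ℝ)+1)*x))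
        + (n:ℝ) * ((2 - 2 * Real.cos x) ^ (-(d-1)) * Real.cos ((n:ℝ)*x)))
      volume (-π) π :=
    (((hi1.sub hi2).const_mul (1-d)).add (hi3.const_mul (n:ℝ)))
  have hftc := intervalIntegral.integral_eq_sub_of_hasDerivAt hderiv hint
  have hzero : (fun y => (2 - 2 * Real.cos y) ^ (1-d) * Real.sin ((n:ℝ)*y)) π
      - (fun y => (2 - 2 * Real.cos y) ^ (1-d) * Real.sin ((n:ℝ)*y)) (-π) = 0 := by
    beta_reduce
    rw [Real.cos_neg, Real.sin_nat_mul_pi, show (n:ℝ) * -π = -((n:ℝ)*π) by ring,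
      Real.sin_neg, Real.sin_nat_mul_pi]
    simp
  rw [hzero] at hftc
  rw [intervalIntegral.integral_add (((hi1.sub hi2).const_mul (1-d))) (hi3.const_mul (n:ℝ)),
    intervalIntegral.integral_const_mul, intervalIntegral.integral_const_mul,
    intervalIntegral.integral_sub hi1 hi2] at hftc
  exact hftc

end FracNoiseAux
namespace FracNoiseAux

lemma gamma_d_ne_zero {d : ℝ} (hd1 : -1 < d) (hd0 : d ≠ 0) : Real.Gamma d ≠ 0 := by
  apply Real.Gamma_ne_zero
  intro m hc
  rcases Nat.eq_zero_or_pos m with rfl | hm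
  · simp at hc; exact hd0 hc
  · have h1 : (1:ℝ) ≤ (m:ℝ) := by exact_mod_cast hm
    rw [hc] at hd1; linarith

set_option maxHeartbeats 1600000 in
lemma closed_form {d : ℝ} (hd1 : -1 < d) (hd2 : d < 1/2) (hd0 : d ≠ 0) (h : ℕ) :
    (∫ x in (-π)..π, (2 - 2 * Real.cos x) ^ (-d) * Real.cos ((h:ℝ) * x))
      = 2 * π * (Real.Gamma (1-2*d) * Real.Gamma ((h:ℝ)+d)
          / (Real.Gamma (1-d) * Real.Gamma d * Real.Gamma (1+(h:ℝ)-d))) := by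
  have hπ := Real.pi_pos
  have hGd : Real.Gamma d ≠ 0 := gamma_d_ne_zero hd1 hd0
  have hG1d : Real.Gamma (1-d) ≠ 0 := (Real.Gamma_pos_of_pos (by linarith)).ne'
  have hG12d : Real.Gamma (1-2*d) ≠ 0 := (Real.Gamma_pos_of_pos (by linarith)).ne'
  suffices H : ∀ n : ℕ,
      ((∫ x in (-π)..π, (2 - 2 * Real.cos x) ^ (-d) * Real.cos ((n:ℝ) * x))
        = 2 * π * (Real.Gamma (1-2*d) * Real.Gamma ((n:ℝ)+d)
            / (Real.Gamma (1-d) * Real.Gamma d * Real.Gamma (1+(n:ℝ)-d))))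
      ∧ ((∫ x in (-π)..π, (2 - 2 * Real.cos x) ^ (-d) * Real.cos (((n:ℝ)+1) * x))
        = 2 * π * (Real.Gamma (1-2*d) * Real.Gamma (((n:ℝ)+1)+d)
            / (Real.Gamma (1-d) * Real.Gamma d * Real.Gamma (1+((n:ℝ)+1)-d)))) by
    exact (H h).1
  intro n
  induction n with
  | zero =>
    constructor
    · push_cast
      rw [show ((0:ℝ)+d) = d by ring, show ((1:ℝ)+0-d) = 1-d by ring,
        F_zero hd2]
      field_simp
    · push_cast
      rw [show ((0:ℝ)+1) = 1 by norm_num]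
      have hne1d : (1:ℝ)-d ≠ 0 := by intro hc; linarith
      have h2d2 : (2:ℝ)-2*d ≠ 0 := by intro hc; linarith
      have h12d : (1:ℝ)-2*d ≠ 0 := by intro hc; linarith
      have hrel0 := rel1 (d := d) hd2 0
      rw [show ((0:ℝ)+1) = 1 by norm_num] at hrel0
      have hm : (∫ x in (-π)..π, (2 - 2*Real.cos x)^(-d) * Real.cos (((0:ℝ)-1) * x))
          = ∫ x in (-π)..π, (2 - 2*Real.cos x)^(-d) * Real.cos ((1:ℝ) * x) := by
        apply intervalIntegral.integral_congr
        intro x _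
        beta_reduce
        have hx : ((0:ℝ)-1)*x = -((1:ℝ)*x) := by ring
        rw [hx, Real.cos_neg]
      rw [hm, F_zero (show d-1 < 1/2 by linarith), F_zero hd2] at hrel0
      have key : 2*(π * Real.Gamma (1-2*(d-1)) / Real.Gamma (1-(d-1))^2)
          = 2*(2*(π * Real.Gamma (1-2*d) / Real.Gamma (1-d)^2))
            - 2*π*(Real.Gamma (1-2*d) * Real.Gamma (1+d)
                / (Real.Gamma (1-d) * Real.Gamma d * Real.Gamma (1+1-d)))
            - 2*π*(Real.Gamma (1-2*d) * Real.Gamma (1+d)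
                / (Real.Gamma (1-d) * Real.Gamma d * Real.Gamma (1+1-d))) := by
        rw [show (1:ℝ)-2*(d-1) = (2-2*d)+1 by ring, Real.Gamma_add_one h2d2,
          show (2:ℝ)-2*d = (1-2*d)+1 by ring, Real.Gamma_add_one h12d,
          show (1:ℝ)-(d-1) = (1-d)+1 by ring, Real.Gamma_add_one hne1d,
          show (1:ℝ)+d = d+1 by ring, Real.Gamma_add_one hd0,
          show (1:ℝ)+1-d = (1-d)+1 by ring, Real.Gamma_add_one hne1d]
        field_simp
        ring
      linarith [hrel0, key]
  | succ n ih =>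
    constructor
    · push_cast
      exact ih.2
    · push_cast
      have hn0 : (0:ℝ) ≤ (n:ℝ) := Nat.cast_nonneg n
      rw [show ((n:ℝ)+1+1) = (n:ℝ)+2 by ring]
      have hrec := rec_nat (d := d) hd2 (n+1)
      push_cast at hrec
      rw [show ((n:ℝ)+1-1) = (n:ℝ) by ring, show ((n:ℝ)+1+1) = (n:ℝ)+2 by ring] at hrec
      have hrel := rel1 (d := d) hd2 ((n:ℝ)+1)
      rw [show ((n:ℝ)+1+1) = (n:ℝ)+2 by ring, show ((n:ℝ)+1-1) = (n:ℝ) by ring] at hrel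
      have hn2d : ((n:ℝ)+2-d) ≠ 0 := ne_of_gt (by linarith)
      have hsolve : ((n:ℝ)+2-d)
            * (∫ x in (-π)..π, (2 - 2 * Real.cos x) ^ (-d) * Real.cos (((n:ℝ)+2) * x))
          = 2*((n:ℝ)+1)
              * (∫ x in (-π)..π, (2 - 2 * Real.cos x) ^ (-d) * Real.cos (((n:ℝ)+1) * x))
            - ((n:ℝ)+d)
              * (∫ x in (-π)..π, (2 - 2 * Real.cos x) ^ (-d) * Real.cos ((n:ℝ) * x)) := by
        linear_combination (-1) * hrec + ((n:ℝ)+1) * hrel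
      have hF2 : (∫ x in (-π)..π, (2 - 2 * Real.cos x) ^ (-d) * Real.cos (((n:ℝ)+2) * x))
          = (2*((n:ℝ)+1)
              * (∫ x in (-π)..π, (2 - 2 * Real.cos x) ^ (-d) * Real.cos (((n:ℝ)+1) * x))
            - ((n:ℝ)+d)
              * (∫ x in (-π)..π, (2 - 2 * Real.cos x) ^ (-d) * Real.cos ((n:ℝ) * x)))
            / ((n:ℝ)+2-d) := by
        rw [eq_div_iff hn2d]; linear_combination hsolve
      rw [hF2, ih.1, ih.2]
      have hnd : ((n:ℝ)+d) ≠ 0 := by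
        rcases Nat.eq_zero_or_pos n with rfl | hn
        · simpa using hd0
        · have h1 : (1:ℝ) ≤ (n:ℝ) := by exact_mod_cast hn
          exact ne_of_gt (by linarith)
      have hn1d : ((n:ℝ)+1+d) ≠ 0 := ne_of_gt (by linarith)
      have hGn1d : Real.Gamma (1+(n:ℝ)-d) ≠ 0 :=
        (Real.Gamma_pos_of_pos (by linarith)).ne'
      have ha : (1+((n:ℝ)+1)-d) ≠ 0 := ne_of_gt (by linarith)
      have hb : (1+(n:ℝ)-d) ≠ 0 := ne_of_gt (by linarith)
      have ha' : ((1+(n:ℝ)-d)+1) ≠ 0 := by intro hc; linarith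
      have hnd' : (((n:ℝ)+d)+1) ≠ 0 := by intro hc; linarith
      rw [show ((n:ℝ)+2+d) = ((n:ℝ)+1+d)+1 by ring, Real.Gamma_add_one hn1d,
        show ((n:ℝ)+1+d) = ((n:ℝ)+d)+1 by ring, Real.Gamma_add_one hnd,
        show (1+((n:ℝ)+2)-d) = (1+((n:ℝ)+1)-d)+1 by ring, Real.Gamma_add_one ha,
        show (1+((n:ℝ)+1)-d) = (1+(n:ℝ)-d)+1 by ring, Real.Gamma_add_one hb]
      rw [div_eq_iff hn2d]
      field_simp
      ring

end FracNoiseAux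

/-- for `-1 < d < 1/2`, `d ≠ 0` and `h : ℕ`,
`(1/2π) ∫_{-π}^{π} (2-2cos λ)^(-d) cos(hλ) dλ = Γ(1-2d)Γ(h+d)/(Γ(1-d)Γ(d)Γ(1+h-d))`;
consequently the ARFIMA(0,d,0) autocovariance `γ₀(h)` (with innovation variance `σ² > 0`)
equals `σ²Γ(1-2d)Γ(h+d)/(Γ(1-d)Γ(d)Γ(1+h-d))` and the autocorrelation `γ₀(h)/γ₀(0)`
equals `Γ(1-d)Γ(h+d)/(Γ(d)Γ(1+h-d))`. -/
theorem fractional_noise_autocovariance (d σ : ℝ) (hd1 : -1 < d) (hd2 : d < 1/2)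
    (hd0 : d ≠ 0) (hσ : 0 < σ) (h : ℕ) :
    (1 / (2 * π)) * (∫ x in (-π)..π, (2 - 2 * Real.cos x) ^ (-d) * Real.cos ((h : ℝ) * x)) =
      Real.Gamma (1 - 2 * d) * Real.Gamma ((h : ℝ) + d) /
        (Real.Gamma (1 - d) * Real.Gamma d * Real.Gamma (1 + (h : ℝ) - d)) ∧
    σ ^ 2 * ((1 / (2 * π)) *
        (∫ x in (-π)..π, (2 - 2 * Real.cos x) ^ (-d) * Real.cos ((h : ℝ) * x))) =
      σ ^ 2 * Real.Gamma (1 - 2 * d) * Real.Gamma ((h : ℝ) + d) /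
        (Real.Gamma (1 - d) * Real.Gamma d * Real.Gamma (1 + (h : ℝ) - d)) ∧
    (σ ^ 2 * ((1 / (2 * π)) *
        (∫ x in (-π)..π, (2 - 2 * Real.cos x) ^ (-d) * Real.cos ((h : ℝ) * x)))) /
      (σ ^ 2 * ((1 / (2 * π)) *
        (∫ x in (-π)..π, (2 - 2 * Real.cos x) ^ (-d) * Real.cos ((0 : ℝ) * x)))) =
      Real.Gamma (1 - d) * Real.Gamma ((h : ℝ) + d) /
        (Real.Gamma d * Real.Gamma (1 + (h : ℝ) - d)) := by
  have hπ := Real.pi_pos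
  have hGd : Real.Gamma d ≠ 0 := FracNoiseAux.gamma_d_ne_zero hd1 hd0
  have hG1d : Real.Gamma (1-d) ≠ 0 := (Real.Gamma_pos_of_pos (by linarith)).ne'
  have hG12d : Real.Gamma (1-2*d) ≠ 0 := (Real.Gamma_pos_of_pos (by linarith)).ne'
  have hh0 : (0:ℝ) ≤ (h:ℝ) := Nat.cast_nonneg h
  have hGhd : Real.Gamma ((h:ℝ)+d) ≠ 0 := by
    rcases Nat.eq_zero_or_pos h with rfl | hh
    · simpa using hGd
    · have h1 : (1:ℝ) ≤ (h:ℝ) := by exact_mod_cast hh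
      exact (Real.Gamma_pos_of_pos (by linarith)).ne'
  have hG1hd : Real.Gamma (1+(h:ℝ)-d) ≠ 0 :=
    (Real.Gamma_pos_of_pos (by linarith)).ne'
  have hcf := FracNoiseAux.closed_form hd1 hd2 hd0 h
  have hzero' := FracNoiseAux.F_zero (e := d) hd2
  have hp1 : (1 / (2 * π)) *
      (∫ x in (-π)..π, (2 - 2 * Real.cos x) ^ (-d) * Real.cos ((h : ℝ) * x)) =
      Real.Gamma (1 - 2 * d) * Real.Gamma ((h : ℝ) + d) /
        (Real.Gamma (1 - d) * Real.Gamma d * Real.Gamma (1 + (h : ℝ) - d)) := by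
    rw [hcf]
    field_simp
  refine ⟨hp1, ?_, ?_⟩
  · rw [hp1]; ring
  · rw [hp1, hzero']
    field_simp [hσ.ne']
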